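/- Let G be an abelian group that is strongly non-divisible (no proper quotient is divisible). Then the torsion-free rank r₀(G) of G is finite. -/

import Mathlib

/-- The subgroup mG = {m•x : x ∈ G} of an abelian group G. -/
def nsmulRange (G : Type*) [AddCommGroup G] (m : ℕ) : AddSubgroup G :=
  (m • AddMonoidHom.id G).range

/-- The first Ulm subgroup G¹ = ⋂_{m ≥ 1} mG. -/
def ulm (G : Type*) [AddCommGroup G] : AddSubgroup G :=
  ⨅ m ∈ Set.Ioi (0 : ℕ), nsmulRange G m

/-- A strongly non-divisible abelian group has finite torsion-free rank. -/
theorem finite_rank_of_strongly_nondivisible (G : Type*) [AddCommGroup G]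
    (h : ∀ H : AddSubgroup G, H ≠ ⊤ → ¬ (∀ m : ℕ, 0 < m → nsmulRange (G ⧸ H) m = ⊤)) :
    Module.rank ℤ G < Cardinal.aleph0 := by
  by_contra hrank
  push_neg at hrank
  -- get an infinite linearly independent family
  obtain ⟨s, hs, hsli⟩ := exists_set_linearIndependent_of_isDomain ℤ G
  have : Infinite s := by
    rw [Cardinal.infinite_iff, hs]; exact hrank
  obtain ⟨e⟩ : Nonempty (ℕ ↪ s) := ⟨Infinite.natEmbedding s⟩
  set v : ℕ → G := fun n => (e n : G) with hv
  have hvli : LinearIndependent ℤ v := hsli.comp e e.injective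
  -- surjection ℕ → ℚ
  obtain ⟨q, hq⟩ := exists_surjective_nat ℚ
  -- linear maps
  let i : (ℕ →₀ ℤ) →ₗ[ℤ] G := Finsupp.linearCombination ℤ v
  have hi : Function.Injective i := hvli
  let f : (ℕ →₀ ℤ) →ₗ[ℤ] ℚ := Finsupp.linearCombination ℤ q
  have hf : Function.Surjective f := by
    rw [← LinearMap.range_eq_top, Finsupp.range_linearCombination,
      hq.range_eq, Submodule.span_univ]
  -- extend along i using Baer's criterion for ℚ
  obtain ⟨g, hg⟩ := (Module.Baer.of_divisible ℚ).extension_property i hi f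
  have hgsurj : Function.Surjective g := by
    intro y
    obtain ⟨x, hx⟩ := hf y
    exact ⟨i x, by rw [← hx, ← hg]; rfl⟩
  -- the kernel is a proper subgroup with divisible quotient
  set H : AddSubgroup G := g.toAddMonoidHom.ker with hH
  have hHne : H ≠ ⊤ := by
    intro htop
    obtain ⟨x, hx⟩ := hgsurj 1
    have : x ∈ H := htop ▸ AddSubgroup.mem_top x
    rw [AddMonoidHom.mem_ker] at this
    simp only [LinearMap.toAddMonoidHom_coe] at this
    rw [hx] at this
    exact one_ne_zero this
  refine h H hHne fun m hm => ?_
  rw [eq_top_iff]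
  intro y _
  obtain ⟨x, rfl⟩ := QuotientAddGroup.mk_surjective y
  obtain ⟨z, hz⟩ := hgsurj ((g x) / m)
  refine ⟨z, ?_⟩
  show m • (AddMonoidHom.id (G ⧸ H)) ((z : G) : G ⧸ H) = _
  simp only [AddMonoidHom.id_apply]
  rw [← QuotientAddGroup.mk_nsmul]
  rw [QuotientAddGroup.eq]
  show -(m • z) + x ∈ g.toAddMonoidHom.ker
  rw [AddMonoidHom.mem_ker]
  simp only [LinearMap.toAddMonoidHom_coe, map_add, map_neg, map_nsmul]
  rw [hz]
  have hm0 : (m : ℚ) ≠ 0 := Nat.cast_ne_zero.mpr hm.ne'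
  rw [nsmul_eq_mul]
  field_simp
  ring
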